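/- Let A_ZF be Hermitian positive definite with largest and smallest eigenvalues λ_max, λ_min, let ρ > 0, and suppose Ψ^H Ψ = I and Σ² is diagonal with eigenvalues equal to the eigenvalues of A_ZF (blockwise, so λ_max(Σ^{-2}) = 1/λ_min and λ_min(Σ^{-2}) = 1/λ_max). Then cond(Ψ^H Ψ + ρ^{-1} Σ^{-2}) = cond(A_ZF) / cond(A_ZF + ρ^{-1} I), where cond(A_ZF + ρ^{-1} I) = (λ_max + ρ^{-1})/(λ_min + ρ^{-1}). -/

import Mathlib

open Matrix
open scoped ComplexOrder

open Set in
/-- If `C = ↑ₐd + c • B` with `c > 0`, the extreme eigenvalues transform affinely. -/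
lemma eig_affine {N : ℕ} (hN : 0 < N) {B C : Matrix (Fin N) (Fin N) ℂ}
    (hB : B.IsHermitian) (hC : C.IsHermitian) {c d : ℝ} (hc : 0 < c)
    (h : C = algebraMap ℝ (Matrix (Fin N) (Fin N) ℂ) d + c • B) :
    (⨆ i, hC.eigenvalues i) = d + c * ⨆ i, hB.eigenvalues i ∧
      (⨅ i, hC.eigenvalues i) = d + c * ⨅ i, hB.eigenvalues i := by
  haveI : Nonempty (Fin N) := Fin.pos_iff_nonempty.mp hN
  have hspec : spectrum ℝ C = (fun x : ℝ => d + c * x) '' spectrum ℝ B := by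
    rw [h, ← spectrum.singleton_add_eq,
      show c • B = (Units.mk0 c hc.ne') • B from rfl,
      spectrum.unit_smul_eq_smul]
    ext x
    simp only [Set.mem_add, Set.mem_smul_set, Set.mem_singleton_iff, Set.mem_image,
      Units.smul_mk0, smul_eq_mul]
    constructor
    · rintro ⟨a, rfl, _, ⟨y, hy, rfl⟩, rfl⟩; exact ⟨y, hy, rfl⟩
    · rintro ⟨y, hy, rfl⟩; exact ⟨d, rfl, c * y, ⟨y, hy, rfl⟩, rfl⟩
  have hrange : Set.range hC.eigenvalues =
      (fun x : ℝ => d + c * x) '' Set.range hB.eigenvalues := by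
    rw [← hB.spectrum_real_eq_range_eigenvalues, ← hC.spectrum_real_eq_range_eigenvalues, hspec]
  have hmono : Monotone (fun x : ℝ => d + c * x) :=
    fun a b hab => by dsimp; nlinarith
  have hcont : Continuous (fun x : ℝ => d + c * x) := by continuity
  constructor
  · rw [iSup, iSup, hrange,
      ← Monotone.map_csSup_of_continuousAt hcont.continuousAt hmono (range_nonempty _)
        (Set.finite_range _).bddAbove]
  · rw [iInf, iInf, hrange,
      ← Monotone.map_csInf_of_continuousAt hcont.continuousAt hmono (range_nonempty _)
        (Set.finite_range _).bddBelow]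

/-- Condition number of a Hermitian matrix: ratio of largest to smallest eigenvalue. -/
noncomputable def condNum {n : Type*} [Fintype n] [DecidableEq n]
    {A : Matrix n n ℂ} (hA : A.IsHermitian) : ℝ :=
  (⨆ i, hA.eigenvalues i) / (⨅ i, hA.eigenvalues i)

/-- Let `A_ZF` be Hermitian positive definite with extreme eigenvalues
`λmax`, `λmin`, let `ρ > 0`, and suppose `Ψᴴ Ψ = I` and `Σ⁻²` has extreme eigenvalues
`1/λmin` and `1/λmax`. Then `cond(Ψᴴ Ψ + ρ⁻¹ Σ⁻²) = cond(A_ZF) / cond(A_ZF + ρ⁻¹ I)`,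
where `cond(A_ZF + ρ⁻¹ I) = (λmax + ρ⁻¹)/(λmin + ρ⁻¹)`. -/
theorem cond_eLMMSE_ratio_identity {M N : ℕ} (hN : 0 < N)
    (A Sm : Matrix (Fin N) (Fin N) ℂ) (Ψ : Matrix (Fin M) (Fin N) ℂ)
    (ρ lmax lmin : ℝ) (hρ : 0 < ρ)
    (hA : A.PosDef)
    (hmax : (⨆ i, hA.isHermitian.eigenvalues i) = lmax)
    (hmin : (⨅ i, hA.isHermitian.eigenvalues i) = lmin)
    (hΨ : Ψᴴ * Ψ = 1)
    (hSdiag : Sm.IsDiag) (hSinv : IsUnit Sm.det)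
    (hS : ((Sm ^ 2)⁻¹).IsHermitian)
    (hSmax : (⨆ i, hS.eigenvalues i) = lmin⁻¹)
    (hSmin : (⨅ i, hS.eigenvalues i) = lmax⁻¹)
    (hΦ : (Ψᴴ * Ψ + ((ρ⁻¹ : ℝ) : ℂ) • (Sm ^ 2)⁻¹).IsHermitian)
    (hAr : (A + ((ρ⁻¹ : ℝ) : ℂ) • (1 : Matrix (Fin N) (Fin N) ℂ)).IsHermitian) :
    condNum hΦ = condNum hA.isHermitian / condNum hAr ∧
      condNum hAr = (lmax + ρ⁻¹) / (lmin + ρ⁻¹) := by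
  haveI : Nonempty (Fin N) := Fin.pos_iff_nonempty.mp hN
  have hρi : 0 < ρ⁻¹ := inv_pos.mpr hρ
  obtain ⟨i, hi⟩ := exists_eq_ciInf_of_finite (f := hA.isHermitian.eigenvalues)
  have hlmin : 0 < lmin := by rw [← hmin, ← hi]; exact hA.eigenvalues_pos i
  have hlmax : lmin ≤ lmax := by
    rw [← hmin, ← hmax, ← hi]
    exact le_ciSup (Set.finite_range _).bddAbove i
  have hlmax0 : 0 < lmax := lt_of_lt_of_le hlmin hlmax
  have hΦeq : Ψᴴ * Ψ + ((ρ⁻¹ : ℝ) : ℂ) • (Sm ^ 2)⁻¹ =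
      algebraMap ℝ (Matrix (Fin N) (Fin N) ℂ) 1 + (ρ⁻¹ : ℝ) • (Sm ^ 2)⁻¹ := by
    rw [hΨ, _root_.map_one, Complex.coe_smul]
  obtain ⟨hΦsup, hΦinf⟩ := eig_affine hN hS hΦ hρi hΦeq
  have hAreq : A + ((ρ⁻¹ : ℝ) : ℂ) • (1 : Matrix (Fin N) (Fin N) ℂ) =
      algebraMap ℝ (Matrix (Fin N) (Fin N) ℂ) ρ⁻¹ + (1 : ℝ) • A := by
    rw [Algebra.algebraMap_eq_smul_one, Complex.coe_smul, one_smul, add_comm]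
  obtain ⟨hArsup, hArinf⟩ := eig_affine hN hA.isHermitian hAr one_pos hAreq
  rw [hmax] at hArsup; rw [hmin] at hArinf
  rw [hSmax] at hΦsup; rw [hSmin] at hΦinf
  have h1 : lmin + ρ⁻¹ ≠ 0 := by positivity
  have h2 : lmax + ρ⁻¹ ≠ 0 := by positivity
  constructor
  · rw [condNum, condNum, condNum, hΦsup, hΦinf, hArsup, hArinf, hmax, hmin]
    field_simp
    ring
  · rw [condNum, hArsup, hArinf]
    ring_nf
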